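/- In the metric space M₂, for every m ∈ ℕ, setting A_m = {u_m, v_m}, one has d(x,y) + d(u_m,v_m) ≤ d(x,u_m) + d(y,v_m) for all x, y ∈ M₂ ∖ A_m. Consequently, M₂ has the sequential long trapezoid property (seq-LTP). -/

import Mathlib

/-- Build a metric space from a distance function which vanishes on the diagonal and takes
values in `[1,2]` off the diagonal (the triangle inequality is then automatic). -/
noncomputable def MetricSpace.ofOneTwo {α : Type*} (D : α → α → ℝ)
    (hself : ∀ x, D x x = 0) (hsymm : ∀ x y, D x y = D y x)
    (hlow : ∀ x y, x ≠ y → 1 ≤ D x y) (hhigh : ∀ x y, D x y ≤ 2) : MetricSpace α :=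
  { dist := D
    dist_self := hself
    dist_comm := hsymm
    dist_triangle := by
      intro x y z
      show D x z ≤ D x y + D y z
      rcases eq_or_ne x y with rfl | hxy
      · simp [hself]
      rcases eq_or_ne y z with rfl | hyz
      · simp [hself]
      have h1 := hlow x y hxy
      have h2 := hlow y z hyz
      have h3 := hhigh x z
      linarith
    eq_of_dist_eq_zero := by
      intro x y hxy
      replace hxy : D x y = 0 := hxy
      by_contra h
      have := hlow x y h
      linarith }

/-- The points of the metric space `M₂`: `a 0, a 1, b 0, b 1` and `u m, v m` for `m : ℕ`. -/
inductive M2 where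
  | a : Fin 2 → M2
  | b : Fin 2 → M2
  | u : ℕ → M2
  | v : ℕ → M2
deriving DecidableEq

namespace M2

/-- One-sided description of the pairs of points of `M₂` at distance `1`:
`d(aᵢ, bⱼ) = d(aᵢ, uₘ) = d(bᵢ, vₘ) = d(uₘ, vₘ) = 1`. -/
def one : M2 → M2 → Prop
  | .a _, .b _ => True
  | .a _, .u _ => True
  | .b _, .v _ => True
  | .u m, .v l => m = l
  | _, _ => False

/-- The distance on `M₂`: `0` on the diagonal, `1` on the pairs described by `M2.one`
(in either order), and `2` otherwise. -/
noncomputable def D (p q : M2) : ℝ :=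
  open scoped Classical in
  if p = q then 0 else if one p q ∨ one q p then 1 else 2

noncomputable instance : MetricSpace M2 :=
  MetricSpace.ofOneTwo D
    (fun x => by simp [D])
    (fun x y => by
      rcases eq_or_ne x y with rfl | h
      · rfl
      · rw [D, D, if_neg h, if_neg (Ne.symm h)]
        rcases em (one x y ∨ one y x) with h2 | h2
        · rw [if_pos h2, if_pos h2.symm]
        · rw [if_neg h2, if_neg fun hc => h2 hc.symm])
    (fun x y h => by rw [D, if_neg h]; split_ifs <;> norm_num)
    (fun x y => by rw [D]; split_ifs <;> norm_num)

end M2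

/-- A metric space `M` has the *sequential long trapezoid property* (seq-LTP). -/
def SeqLTP (M : Type*) [MetricSpace M] : Prop :=
  ∀ ε : ℝ, 0 < ε → ∃ A : ℕ → Set M,
    (Pairwise fun m k => Disjoint (A m) (A k)) ∧
    ∀ m : ℕ, ∃ u ∈ A m, ∃ v ∈ A m, u ≠ v ∧
      ∀ x ∉ A m, ∀ y ∉ A m,
        (1 - ε) * (dist x y + dist u v) ≤ dist x u + dist y v


lemma M2.dist_eq (p q : M2) : dist p q = M2.D p q := rfl

lemma M2.key (m : ℕ) (x : M2) (hx : x ∉ ({M2.u m, M2.v m} : Set M2))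
    (y : M2) (hy : y ∉ ({M2.u m, M2.v m} : Set M2)) :
    dist x y + dist (M2.u m) (M2.v m) ≤ dist x (M2.u m) + dist y (M2.v m) := by
  simp only [Set.mem_insert_iff, Set.mem_singleton_iff, not_or] at hx hy
  simp only [M2.dist_eq, M2.D, M2.one]
  rcases x with i | i | k | k <;> rcases y with j | j | l | l <;>
    split_ifs <;> simp_all <;> norm_num <;> split_ifs <;> norm_num

/-- In `M₂`, for every `m`, taking `Aₘ = {uₘ, vₘ}` one has the (ε-free) long trapezoid
inequality for all points outside `Aₘ`; consequently `M₂` has the seq-LTP. -/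
theorem M2_seqLTP :
    (∀ m : ℕ, ∀ x ∉ ({M2.u m, M2.v m} : Set M2), ∀ y ∉ ({M2.u m, M2.v m} : Set M2),
      dist x y + dist (M2.u m) (M2.v m) ≤ dist x (M2.u m) + dist y (M2.v m)) ∧
    SeqLTP M2 := by
  refine ⟨M2.key, fun ε hε => ⟨fun m => {M2.u m, M2.v m}, ?_, fun m => ?_⟩⟩
  · intro m k hmk
    rw [Set.disjoint_left]
    rintro p (rfl | rfl) hp <;> simp_all
  · refine ⟨M2.u m, by simp, M2.v m, by simp, by simp, fun x hx y hy => ?_⟩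
    have h1 := M2.key m x hx y hy
    have h2 := dist_nonneg (x := x) (y := y)
    have h3 := dist_nonneg (x := M2.u m) (y := M2.v m)
    nlinarith
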